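/- arXiv:2204.11387 — 4 statements merged into one kernel-verified Lean document; each statement's English description precedes it below -/
import Mathlib

section
/- Let P₁, …, Pₙ be pairwise commuting contractions on a complex Hilbert space H. Then the product P₁P₂⋯Pₙ is unitary if and only if each Pᵢ is unitary. -/
open ContinuousLinearMap in
lemma aux_norm_prod_le_one {H : Type*} [NormedAddCommGroup H] [InnerProductSpace ℂ H]
    [CompleteSpace H] :
    ∀ (l : List (H →L[ℂ] H)), (∀ a ∈ l, ‖a‖ ≤ 1) → ‖l.prod‖ ≤ 1 := by
  intro l
  induction l with
  | nil => intro _; rw [List.prod_nil]; exact ContinuousLinearMap.norm_id_le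
  | cons a t ih =>
    intro h
    calc ‖(a :: t).prod‖ = ‖a * t.prod‖ := by rw [List.prod_cons]
      _ ≤ ‖a‖ * ‖t.prod‖ := norm_mul_le _ _
      _ ≤ 1 * 1 := mul_le_mul (h a (by simp)) (ih fun x hx => h x (by simp [hx]))
          (norm_nonneg _) zero_le_one
      _ = 1 := one_mul 1

open ContinuousLinearMap in
lemma aux_unitary_of_list {H : Type*} [NormedAddCommGroup H] [InnerProductSpace ℂ H]
    [CompleteSpace H] :
    ∀ (L : List (H →L[ℂ] H)), (∀ a ∈ L, ∀ b ∈ L, a * b = b * a) →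
      (∀ a ∈ L, ‖a‖ ≤ 1) → L.prod ∈ unitary (H →L[ℂ] H) →
      ∀ a ∈ L, a ∈ unitary (H →L[ℂ] H) := by
  intro L
  induction L with
  | nil => intro _ _ _ a ha; simp at ha
  | cons a t ih =>
    intro hc hn hU b hb
    have hcomm : Commute a t.prod :=
      Commute.list_prod_right t a fun x hx => hc a (by simp) x (by simp [hx])
    set T := t.prod with hT
    have hTn : ‖T‖ ≤ 1 := aux_norm_prod_le_one t fun x hx => hn x (by simp [hx])
    have hUprod : (a :: t).prod = a * T := by simp [hT, List.prod_cons]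
    rw [hUprod] at hU
    -- surjectivity of a
    have hsurj : Function.Surjective a := by
      intro y
      have h2 : (a * T) * star (a * T) = 1 := Unitary.mul_star_self_of_mem hU
      refine ⟨T (star (a * T) y), ?_⟩
      have := congrArg (fun f : H →L[ℂ] H => f y) h2
      simpa [ContinuousLinearMap.mul_apply] using this
    -- norm preservation of a
    have hnorma : ∀ x, ‖a x‖ = ‖x‖ := by
      intro x
      have hU' : T * a ∈ unitary (H →L[ℂ] H) := hcomm ▸ hU
      have h1 : ‖(T * a) x‖ = ‖x‖ := ContinuousLinearMap.norm_map_of_mem_unitary hU' x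
      have h2 : ‖T (a x)‖ ≤ ‖a x‖ := by
        calc ‖T (a x)‖ ≤ ‖T‖ * ‖a x‖ := T.le_opNorm _
          _ ≤ 1 * ‖a x‖ := by
            exact mul_le_mul_of_nonneg_right hTn (norm_nonneg _)
          _ = ‖a x‖ := one_mul _
      have h3 : ‖a x‖ ≤ ‖x‖ := by
        calc ‖a x‖ ≤ ‖a‖ * ‖x‖ := a.le_opNorm _
          _ ≤ 1 * ‖x‖ := mul_le_mul_of_nonneg_right (hn a (by simp)) (norm_nonneg _)
          _ = ‖x‖ := one_mul _
      have h4 : ‖x‖ ≤ ‖a x‖ := by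
        calc ‖x‖ = ‖T (a x)‖ := by
              simpa [ContinuousLinearMap.mul_apply] using h1.symm
          _ ≤ ‖a x‖ := h2
      exact le_antisymm h3 h4
    have ha1 : star a * a = 1 := by
      have := (ContinuousLinearMap.norm_map_iff_adjoint_comp_self a).mp hnorma
      rw [ContinuousLinearMap.star_eq_adjoint]
      exact this
    have ha2 : a * star a = 1 := by
      ext y
      obtain ⟨x, rfl⟩ := hsurj y
      have : star a (a x) = x := by
        have := congrArg (fun f : H →L[ℂ] H => f x) ha1
        simpa [ContinuousLinearMap.mul_apply] using this
      simp [ContinuousLinearMap.mul_apply, this]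
    have ha : a ∈ unitary (H →L[ℂ] H) := ⟨ha1, ha2⟩
    have hTu : T ∈ unitary (H →L[ℂ] H) := by
      have : T = star a * (a * T) := by rw [← mul_assoc, ha1, one_mul]
      rw [this]
      exact mul_mem (Unitary.star_mem ha) hU
    rcases List.mem_cons.mp hb with rfl | hb'
    · exact ha
    · exact ih (fun x hx y hy => hc x (by simp [hx]) y (by simp [hy]))
        (fun x hx => hn x (by simp [hx])) hTu b hb'

    
theorem stmt_1 {H : Type*} [NormedAddCommGroup H] [InnerProductSpace ℂ H] [CompleteSpace H]
    (n : ℕ) (P : Fin n → (H →L[ℂ] H))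
    (hcomm : ∀ i j, P i * P j = P j * P i)
    (hnorm : ∀ i, ‖P i‖ ≤ 1) :
    (List.ofFn P).prod ∈ unitary (H →L[ℂ] H) ↔ ∀ i, P i ∈ unitary (H →L[ℂ] H) := by
  constructor
  · intro hU i
    refine aux_unitary_of_list (List.ofFn P) ?_ ?_ hU (P i) (by rw [List.mem_ofFn]; exact ⟨i, rfl⟩)
    · intro x hx y hy
      rw [List.mem_ofFn] at hx hy
      obtain ⟨j, rfl⟩ := hx; obtain ⟨k, rfl⟩ := hy
      exact hcomm j k
    · intro x hx
      rw [List.mem_ofFn] at hx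
      obtain ⟨j, rfl⟩ := hx
      exact hnorm j
  · intro h
    exact Submonoid.list_prod_mem _ (by
      intro x hx
      rw [List.mem_ofFn] at hx
      obtain ⟨j, rfl⟩ := hx
      exact h j)
end

section
/- Let F₁, F₂ be bounded operators on a complex Hilbert space E satisfying F₁F₂ = 0, F₂F₁ = 0, F₁*F₁ + F₂F₂* = I, and F₁F₁* + F₂*F₂ = I. Then for every z ∈ ℂ with |z| = 1, the operator F₁* + zF₂ is unitary. -/
open ContinuousLinearMap

theorem stmt_4 {E : Type*} [NormedAddCommGroup E] [InnerProductSpace ℂ E] [CompleteSpace E]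
    (F₁ F₂ : E →L[ℂ] E)
    (h12 : F₁ * F₂ = 0) (h21 : F₂ * F₁ = 0)
    (h1 : adjoint F₁ * F₁ + F₂ * adjoint F₂ = 1)
    (h2 : F₁ * adjoint F₁ + adjoint F₂ * F₂ = 1)
    (z : ℂ) (hz : ‖z‖ = 1) :
    adjoint F₁ + z • F₂ ∈ unitary (E →L[ℂ] E) := by
  have hzz : (starRingEnd ℂ) z * z = 1 := by
    rw [mul_comm, Complex.mul_conj]
    norm_cast
    rw [Complex.normSq_eq_norm_sq, hz]; norm_num
  have hzz' : z * (starRingEnd ℂ) z = 1 := by rw [mul_comm]; exact hzz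
  have hstar : star (adjoint F₁ + z • F₂) = F₁ + (starRingEnd ℂ) z • adjoint F₂ := by
    simp [star_eq_adjoint, adjoint_adjoint]
  have h1221 : adjoint F₂ * adjoint F₁ = 0 := by
    rw [← star_eq_adjoint, ← star_eq_adjoint, ← star_mul, h12]; simp
  have h2112 : adjoint F₁ * adjoint F₂ = 0 := by
    rw [← star_eq_adjoint, ← star_eq_adjoint, ← star_mul, h21]; simp
  constructor
  · rw [hstar]
    calc (F₁ + (starRingEnd ℂ) z • adjoint F₂) * (adjoint F₁ + z • F₂)
        = F₁ * adjoint F₁ + z • (F₁ * F₂) + (starRingEnd ℂ) z • (adjoint F₂ * adjoint F₁)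
          + ((starRingEnd ℂ) z * z) • (adjoint F₂ * F₂) := by
          rw [add_mul, mul_add, mul_add, smul_mul_assoc, smul_mul_assoc, mul_smul_comm,
            mul_smul_comm, smul_smul]; abel
      _ = 1 := by rw [h12, h1221, hzz, one_smul, smul_zero, smul_zero, add_zero, add_zero, h2]
  · rw [hstar]
    calc (adjoint F₁ + z • F₂) * (F₁ + (starRingEnd ℂ) z • adjoint F₂)
        = adjoint F₁ * F₁ + (starRingEnd ℂ) z • (adjoint F₁ * adjoint F₂) + z • (F₂ * F₁)
          + (z * (starRingEnd ℂ) z) • (F₂ * adjoint F₂) := by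
          rw [add_mul, mul_add, mul_add, smul_mul_assoc, smul_mul_assoc, mul_smul_comm,
            mul_smul_comm, smul_smul]; abel
      _ = 1 := by rw [h21, h2112, hzz', one_smul, smul_zero, smul_zero, add_zero, add_zero, h1]
end

section
/- Let F₁, F₂ be bounded operators on a complex Hilbert space E satisfying F₁F₂ = 0, F₂F₁ = 0, F₁*F₁ + F₂F₂* = I, and F₁F₁* + F₂*F₂ = I. Set U₁ = F₁* + F₂, U₂ = F₁* − F₂, and Q = (I − U₂U₁*)/2. Then F₁* = (I − Q)U₁ and F₂ = QU₁. -/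
open ContinuousLinearMap

theorem stmt_9 {E : Type*} [NormedAddCommGroup E] [InnerProductSpace ℂ E] [CompleteSpace E]
    (F₁ F₂ : E →L[ℂ] E)
    (h12 : F₁ * F₂ = 0) (h21 : F₂ * F₁ = 0)
    (h1 : adjoint F₁ * F₁ + F₂ * adjoint F₂ = 1)
    (h2 : F₁ * adjoint F₁ + adjoint F₂ * F₂ = 1)
    (U₁ U₂ Q : E →L[ℂ] E)
    (hU₁ : U₁ = adjoint F₁ + F₂) (hU₂ : U₂ = adjoint F₁ - F₂)
    (hQ : Q = (2 : ℂ)⁻¹ • (1 - U₂ * adjoint U₁)) :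
    adjoint F₁ = (1 - Q) * U₁ ∧ F₂ = Q * U₁ := by
  have e1 : adjoint F₁ * adjoint F₂ = 0 := by
    have := congrArg adjoint h21
    simpa [← star_eq_adjoint, star_mul] using this
  have e2 : adjoint F₂ * adjoint F₁ = 0 := by
    have := congrArg adjoint h12
    simpa [← star_eq_adjoint, star_mul] using this
  have hadjU₁ : adjoint U₁ = F₁ + adjoint F₂ := by
    simp [hU₁, ← star_eq_adjoint, star_add]
  have key : U₂ * adjoint U₁ = 1 - (2 : ℂ) • (F₂ * adjoint F₂) := by
    rw [hU₂, hadjU₁]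
    have hF11 : adjoint F₁ * F₁ = 1 - F₂ * adjoint F₂ := by
      rw [← h1]; abel
    rw [sub_mul, mul_add, mul_add, e1, h21, hF11]
    simp [two_smul]
    abel
  have hQ' : Q = F₂ * adjoint F₂ := by
    rw [hQ, key]
    rw [sub_sub_cancel, smul_smul]
    norm_num
  have hF2F2F2 : F₂ * adjoint F₂ * F₂ = F₂ := by
    have : adjoint F₂ * F₂ = 1 - F₁ * adjoint F₁ := by rw [← h2]; abel
    rw [mul_assoc, this, mul_sub, mul_one, ← mul_assoc, h21, zero_mul, sub_zero]
  have hright : F₂ = Q * U₁ := by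
    rw [hQ', hU₁, mul_add, hF2F2F2, mul_assoc, e2, mul_zero, zero_add]
  refine ⟨?_, hright⟩
  rw [sub_mul, one_mul, ← hright, hU₁]
  abel
end

section
/- Let P be a contraction on a complex Hilbert space H and A, B bounded operators such that A − B*P = D_P F₁ D_P and B − A*P = D_P F₂ D_P for bounded operators F₁, F₂ on the closure of the range of D_P, where D_P = (I − P*P)^{1/2}. Then F₁ and F₂ are uniquely determined by these equations. -/
open ContinuousLinearMap

theorem aux_unique {H : Type*} [NormedAddCommGroup H] [InnerProductSpace ℂ H] [CompleteSpace H]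
    (D : H →L[ℂ] H) (hDpos : D.IsPositive)
    (F G : H →L[ℂ] H)
    (hFran : ∀ x, F x ∈ (LinearMap.range (D : H →ₗ[ℂ] H)).topologicalClosure)
    (hGran : ∀ x, G x ∈ (LinearMap.range (D : H →ₗ[ℂ] H)).topologicalClosure)
    (hFsupp : ∀ x ∈ ((LinearMap.range (D : H →ₗ[ℂ] H)).topologicalClosure : Submodule ℂ H)ᗮ, F x = 0)
    (hGsupp : ∀ x ∈ ((LinearMap.range (D : H →ₗ[ℂ] H)).topologicalClosure : Submodule ℂ H)ᗮ, G x = 0)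
    (h : D * F * D = D * G * D) : F = G := by
  set K : Submodule ℂ H := LinearMap.range (D : H →ₗ[ℂ] H) with hK
  set S : Submodule ℂ H := K.topologicalClosure with hS
  have hsa : IsSelfAdjoint D := hDpos.isSelfAdjoint
  have hSK : Sᗮ = Kᗮ := by
    rw [hS, ← Submodule.orthogonal_orthogonal_eq_closure,
      Submodule.triorthogonal_eq_orthogonal]
  -- kernel of D is contained in Sᗮ
  have hker : ∀ v : H, D v = 0 → v ∈ Sᗮ := by
    intro v hv
    rw [hSK, Submodule.mem_orthogonal']
    rintro u ⟨z, rfl⟩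
    calc inner ℂ v (D z) = inner ℂ (D v) z := (hsa.isSymmetric v z).symm
    _ = (0 : ℂ) := by rw [hv]; simp
  -- F and G agree on the range of D
  have hrange : ∀ y : H, F (D y) = G (D y) := by
    intro y
    have hDv : D (F (D y) - G (D y)) = 0 := by
      have := congrArg (fun (T : H →L[ℂ] H) => T y) h
      simp only [mul_apply_eq_comp] at this
      simp [map_sub, this]
    have hmemS : F (D y) - G (D y) ∈ S := S.sub_mem (hFran _) (hGran _)
    have hmemO : F (D y) - G (D y) ∈ Sᗮ := hker _ hDv
    have hz : F (D y) - G (D y) = 0 := by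
      have := Submodule.mem_orthogonal' S _ |>.mp hmemO _ hmemS
      rwa [inner_self_eq_zero] at this
    exact sub_eq_zero.mp hz
  -- F and G agree on K ⊔ Sᗮ, which is dense
  have hdense : Dense ((K ⊔ Sᗮ : Submodule ℂ H) : Set H) := by
    rw [Submodule.dense_iff_topologicalClosure_eq_top]
    rw [eq_top_iff]
    have h1 : S ≤ (K ⊔ Sᗮ).topologicalClosure :=
      Submodule.topologicalClosure_mono (le_sup_left)
    have h2 : Sᗮ ≤ (K ⊔ Sᗮ).topologicalClosure :=
      le_trans le_sup_right (Submodule.le_topologicalClosure _)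
    have h3 : S ⊔ Sᗮ = ⊤ := Submodule.isCompl_orthogonal_of_hasOrthogonalProjection.sup_eq_top
    rw [← h3]
    exact sup_le h1 h2
  refine ContinuousLinearMap.ext_on (s := ((K ⊔ Sᗮ : Submodule ℂ H) : Set H)) ?_ ?_
  · rwa [Submodule.span_eq]
  · intro x hx
    obtain ⟨a, ha, b, hb, rfl⟩ := Submodule.mem_sup.mp hx
    obtain ⟨y, rfl⟩ := ha
    simp [map_add, hrange y, hFsupp b hb, hGsupp b hb]

theorem stmt_19 {H : Type*} [NormedAddCommGroup H] [InnerProductSpace ℂ H] [CompleteSpace H]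
    (P : H →L[ℂ] H) (hP : ‖P‖ ≤ 1)
    (D : H →L[ℂ] H) (hDpos : D.IsPositive)
    (hD2 : D * D = 1 - adjoint P * P)
    (A B : H →L[ℂ] H)
    (F₁ F₂ G₁ G₂ : H →L[ℂ] H)
    -- F₁, F₂, G₁, G₂ are operators on the defect space 𝒟_P = closure(range D):
    (hF₁ran : ∀ x, F₁ x ∈ (LinearMap.range (D : H →ₗ[ℂ] H)).topologicalClosure)
    (hF₂ran : ∀ x, F₂ x ∈ (LinearMap.range (D : H →ₗ[ℂ] H)).topologicalClosure)
    (hG₁ran : ∀ x, G₁ x ∈ (LinearMap.range (D : H →ₗ[ℂ] H)).topologicalClosure)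
    (hG₂ran : ∀ x, G₂ x ∈ (LinearMap.range (D : H →ₗ[ℂ] H)).topologicalClosure)
    (hF₁supp : ∀ x ∈ ((LinearMap.range (D : H →ₗ[ℂ] H)).topologicalClosure : Submodule ℂ H)ᗮ, F₁ x = 0)
    (hF₂supp : ∀ x ∈ ((LinearMap.range (D : H →ₗ[ℂ] H)).topologicalClosure : Submodule ℂ H)ᗮ, F₂ x = 0)
    (hG₁supp : ∀ x ∈ ((LinearMap.range (D : H →ₗ[ℂ] H)).topologicalClosure : Submodule ℂ H)ᗮ, G₁ x = 0)
    (hG₂supp : ∀ x ∈ ((LinearMap.range (D : H →ₗ[ℂ] H)).topologicalClosure : Submodule ℂ H)ᗮ, G₂ x = 0)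
    (hAF : A - adjoint B * P = D * F₁ * D) (hBF : B - adjoint A * P = D * F₂ * D)
    (hAG : A - adjoint B * P = D * G₁ * D) (hBG : B - adjoint A * P = D * G₂ * D) :
    F₁ = G₁ ∧ F₂ = G₂ := by
  constructor
  · exact aux_unique D hDpos F₁ G₁ hF₁ran hG₁ran hF₁supp hG₁supp (hAF ▸ hAG)
  · exact aux_unique D hDpos F₂ G₂ hF₂ran hG₂ran hF₂supp hG₂supp (hBF ▸ hBG)
end
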